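/- arXiv:1707.04246 — 3 statements merged into one kernel-verified Lean document; each statement's English description precedes it below -/
import Mathlib

section
/- Let β = ‖C₀‖·‖A‖·‖(Γ + AC₀A*)⁻¹‖·‖M‖. Then for every δ ≥ 0 and all bounded self-adjoint non-negative operators B₁, B₂ : X → X, the map F satisfies the Lipschitz estimate ‖F(B₁,δ) − F(B₂,δ)‖ ≤ (βδ)² ‖B₁ − B₂‖ in the operator norm; in particular, for δ < 1/β the map B ↦ F(B,δ) is a contraction on the set of bounded self-adjoint non-negative operators on X. -/
open ContinuousLinearMap
open scoped RealInnerProductSpace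

section Aux
variable {Y : Type*} [NormedAddCommGroup Y] [InnerProductSpace ℝ Y] [FiniteDimensional ℝ Y]

lemma pos_inner_nonneg {T : Y →L[ℝ] Y} (hT : T.IsPositive) (x : Y) :
    0 ≤ ⟪T x, x⟫ := by
  simpa using hT.inner_nonneg_left x

lemma pos_smul {T : Y →L[ℝ] Y} (hT : T.IsPositive) {c : ℝ} (hc : 0 ≤ c) :
    (c • T).IsPositive := by
  have hsa : IsSelfAdjoint (c • T) := by
    rw [isSelfAdjoint_iff_isSymmetric]
    intro x y
    have h := (isSelfAdjoint_iff_isSymmetric.mp hT.isSelfAdjoint) x y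
    simp only [ContinuousLinearMap.coe_coe, ContinuousLinearMap.smul_apply,
      real_inner_smul_left, real_inner_smul_right]
    exact congrArg (fun r => c * r) h
  refine ⟨isSelfAdjoint_iff_isSymmetric.mp hsa, fun x => ?_⟩
  have h0 : (c • T).reApplyInnerSelf x = c * ⟪T x, x⟫ := by
    simp [reApplyInnerSelf, real_inner_smul_left]
  rw [h0]
  exact mul_nonneg hc (pos_inner_nonneg hT x)

lemma pos_cs {S : Y →L[ℝ] Y} (hS : S.IsPositive) (a b : Y) :
    ⟪S a, b⟫ ^ 2 ≤ ⟪S a, a⟫ * ⟪S b, b⟫ := by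
  have hsym : ⟪S b, a⟫ = ⟪S a, b⟫ := by
    have h := (isSelfAdjoint_iff_isSymmetric.mp hS.isSelfAdjoint) b a
    exact h.trans (real_inner_comm _ _)
  have key : ∀ t : ℝ, 0 ≤ ⟪S a, a⟫ * (t * t) + (2 * ⟪S a, b⟫) * t + ⟪S b, b⟫ := by
    intro t
    have h0 : 0 ≤ ⟪S (t • a + b), t • a + b⟫ := pos_inner_nonneg hS _
    simp only [map_add, map_smul, inner_add_left, inner_add_right,
      real_inner_smul_left, real_inner_smul_right] at h0
    rw [hsym] at h0
    nlinarith [h0]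
  have hd := discrim_le_zero key
  unfold discrim at hd
  nlinarith [hd]

lemma isUnit_of_posdef {T : Y →L[ℝ] Y} (hT : ∀ y : Y, y ≠ 0 → 0 < ⟪T y, y⟫) :
    IsUnit T := by
  have hinj : Function.Injective T := by
    intro x y hxy
    by_contra hne
    have h := hT (x - y) (sub_ne_zero.mpr hne)
    have : T (x - y) = 0 := by simp [map_sub, hxy]
    rw [this] at h
    simp at h
  have hbij : Function.Bijective (T : Y →ₗ[ℝ] Y) :=
    ⟨hinj, (LinearMap.injective_iff_surjective).mp hinj⟩
  let e := (LinearEquiv.ofBijective (T : Y →ₗ[ℝ] Y) hbij).toContinuousLinearEquiv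
  refine ⟨e.toUnit, ?_⟩
  ext x
  rfl

lemma inv_lower {S : Y →L[ℝ] Y} (hS : S.IsPositive) (hU : IsUnit S) (x : Y) :
    ‖x‖ ^ 2 ≤ ‖Ring.inverse S‖ * ⟪S x, x⟫ := by
  set R := Ring.inverse S with hR
  have hSR : S (R x) = x := by
    have h := Ring.mul_inverse_cancel S hU
    calc S (R x) = (S * R) x := rfl
    _ = x := by rw [h]; rfl
  rcases eq_or_ne x 0 with rfl | hx
  · simp
  have hcs := pos_cs hS (R x) x
  rw [hSR] at hcs
  have h1 : ⟪x, x⟫ = ‖x‖ ^ 2 := real_inner_self_eq_norm_sq x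
  have h2 : ⟪x, R x⟫ ≤ ‖R‖ * ‖x‖ * ‖x‖ := by
    calc ⟪x, R x⟫ ≤ ‖x‖ * ‖R x‖ := real_inner_le_norm x (R x)
    _ ≤ ‖x‖ * (‖R‖ * ‖x‖) := by
        gcongr; exact R.le_opNorm x
    _ = ‖R‖ * ‖x‖ * ‖x‖ := by ring
  have hpos : (0:ℝ) < ‖x‖ := norm_pos_iff.mpr hx
  have hnn : 0 ≤ ⟪S x, x⟫ := pos_inner_nonneg hS x
  rw [h1] at hcs
  have h4 := mul_le_mul_of_nonneg_right h2 hnn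
  nlinarith [hcs, h4, mul_pos hpos hpos]

lemma inv_norm_le {S T : Y →L[ℝ] Y} (hS : S.IsPositive) (hUS : IsUnit S) (hUT : IsUnit T)
    (hle : ∀ y : Y, ⟪S y, y⟫ ≤ ⟪T y, y⟫) :
    ‖Ring.inverse T‖ ≤ ‖Ring.inverse S‖ := by
  refine opNorm_le_bound _ (norm_nonneg _) fun y => ?_
  set z := Ring.inverse T y with hz
  have hTz : T z = y := by
    have h := Ring.mul_inverse_cancel T hUT
    calc T z = (T * Ring.inverse T) y := rfl
    _ = y := by rw [h]; rfl
  have h1 : ‖z‖ ^ 2 ≤ ‖Ring.inverse S‖ * ⟪S z, z⟫ := inv_lower hS hUS z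
  have h2 : ⟪T z, z⟫ ≤ ‖y‖ * ‖z‖ := by
    rw [hTz]; exact real_inner_le_norm y z
  have h3 : ‖z‖ ^ 2 ≤ ‖Ring.inverse S‖ * (‖y‖ * ‖z‖) := by
    calc ‖z‖ ^ 2 ≤ ‖Ring.inverse S‖ * ⟪S z, z⟫ := h1
    _ ≤ ‖Ring.inverse S‖ * ⟪T z, z⟫ := mul_le_mul_of_nonneg_left (hle z) (norm_nonneg _)
    _ ≤ ‖Ring.inverse S‖ * (‖y‖ * ‖z‖) := mul_le_mul_of_nonneg_left h2 (norm_nonneg _)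
  rcases eq_or_lt_of_le (norm_nonneg z) with hz0 | hz0
  · rw [← hz0]; positivity
  · nlinarith [h3]

end Aux

/-- The map `F(B,δ) = C₀ − C₀ A* (Γ + δ² M B M* + A C₀ A*)⁻¹ A C₀`. -/
noncomputable def Fop {X Y : Type*}
    [NormedAddCommGroup X] [InnerProductSpace ℝ X] [CompleteSpace X]
    [NormedAddCommGroup Y] [InnerProductSpace ℝ Y] [FiniteDimensional ℝ Y]
    (A M : X →L[ℝ] Y) (C₀ : X →L[ℝ] X) (Γ : Y →L[ℝ] Y)
    (B : X →L[ℝ] X) (δ : ℝ) : X →L[ℝ] X :=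
  C₀ - (C₀ ∘L (adjoint A) ∘L
    Ring.inverse (Γ + δ ^ 2 • (M ∘L B ∘L adjoint M) + A ∘L C₀ ∘L adjoint A)) ∘L A ∘L C₀

set_option maxHeartbeats 1600000 in
/-- With `β = ‖C₀‖·‖A‖·‖(Γ + A C₀ A*)⁻¹‖·‖M‖`, for every `δ ≥ 0` and all bounded self-adjoint
non-negative `B₁, B₂ : X → X`, `‖F(B₁,δ) − F(B₂,δ)‖ ≤ (βδ)² ‖B₁ − B₂‖`; in particular for
`δ < 1/β` the map `B ↦ F(B,δ)` is a contraction on the self-adjoint non-negative operators. -/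
theorem stmt_2 {X Y : Type*}
    [NormedAddCommGroup X] [InnerProductSpace ℝ X] [CompleteSpace X]
    [NormedAddCommGroup Y] [InnerProductSpace ℝ Y] [FiniteDimensional ℝ Y]
    (A M : X →L[ℝ] Y) (C₀ : X →L[ℝ] X) (Γ : Y →L[ℝ] Y)
    (hC₀ : C₀.IsPositive) (hΓ : Γ.IsPositive)
    (hΓpos : ∀ y : Y, y ≠ 0 → 0 < ⟪Γ y, y⟫)
    (β : ℝ)
    (hβ : β = ‖C₀‖ * ‖A‖ * ‖Ring.inverse (Γ + A ∘L C₀ ∘L adjoint A)‖ * ‖M‖)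
    (δ : ℝ) (hδ : 0 ≤ δ)
    (B₁ B₂ : X →L[ℝ] X) (hB₁ : B₁.IsPositive) (hB₂ : B₂.IsPositive) :
    ‖Fop A M C₀ Γ B₁ δ - Fop A M C₀ Γ B₂ δ‖ ≤ (β * δ) ^ 2 * ‖B₁ - B₂‖ := by
  subst hβ
  set P₁ : Y →L[ℝ] Y := δ ^ 2 • (M ∘L B₁ ∘L adjoint M) with hP₁def
  set P₂ : Y →L[ℝ] Y := δ ^ 2 • (M ∘L B₂ ∘L adjoint M) with hP₂def
  set Q : Y →L[ℝ] Y := A ∘L C₀ ∘L adjoint A with hQdef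
  set S : Y →L[ℝ] Y := Γ + Q with hSdef
  set T₁ : Y →L[ℝ] Y := Γ + P₁ + Q with hT₁def
  set T₂ : Y →L[ℝ] Y := Γ + P₂ + Q with hT₂def
  have hQ : Q.IsPositive := hC₀.conj_adjoint A
  have hP₁ : P₁.IsPositive := pos_smul (hB₁.conj_adjoint M) (sq_nonneg δ)
  have hP₂ : P₂.IsPositive := pos_smul (hB₂.conj_adjoint M) (sq_nonneg δ)
  have hSpos : S.IsPositive := hΓ.add hQ
  have hSpd : ∀ y : Y, y ≠ 0 → 0 < ⟪S y, y⟫ := by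
    intro y hy
    have h1 := hΓpos y hy
    have h2 := pos_inner_nonneg hQ y
    have : ⟪S y, y⟫ = ⟪Γ y, y⟫ + ⟪Q y, y⟫ := by
      simp [hSdef, ContinuousLinearMap.add_apply, inner_add_left]
    linarith [this ▸ (by linarith : (0:ℝ) < ⟪Γ y, y⟫ + ⟪Q y, y⟫)]
  have hT₁pd : ∀ y : Y, y ≠ 0 → 0 < ⟪T₁ y, y⟫ := by
    intro y hy
    have h1 := hΓpos y hy
    have h2 := pos_inner_nonneg hQ y
    have h3 := pos_inner_nonneg hP₁ y
    have h4 : ⟪T₁ y, y⟫ = ⟪Γ y, y⟫ + ⟪P₁ y, y⟫ + ⟪Q y, y⟫ := by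
      simp [hT₁def, ContinuousLinearMap.add_apply, inner_add_left]
    linarith [h4]
  have hT₂pd : ∀ y : Y, y ≠ 0 → 0 < ⟪T₂ y, y⟫ := by
    intro y hy
    have h1 := hΓpos y hy
    have h2 := pos_inner_nonneg hQ y
    have h3 := pos_inner_nonneg hP₂ y
    have h4 : ⟪T₂ y, y⟫ = ⟪Γ y, y⟫ + ⟪P₂ y, y⟫ + ⟪Q y, y⟫ := by
      simp [hT₂def, ContinuousLinearMap.add_apply, inner_add_left]
    linarith [h4]
  have hUS : IsUnit S := isUnit_of_posdef hSpd
  have hUT₁ : IsUnit T₁ := isUnit_of_posdef hT₁pd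
  have hUT₂ : IsUnit T₂ := isUnit_of_posdef hT₂pd
  have hle₁ : ∀ y : Y, ⟪S y, y⟫ ≤ ⟪T₁ y, y⟫ := by
    intro y
    have h3 := pos_inner_nonneg hP₁ y
    have h4 : ⟪T₁ y, y⟫ = ⟪S y, y⟫ + ⟪P₁ y, y⟫ := by
      simp [hT₁def, hSdef, ContinuousLinearMap.add_apply, inner_add_left]
      ring
    linarith [h4]
  have hle₂ : ∀ y : Y, ⟪S y, y⟫ ≤ ⟪T₂ y, y⟫ := by
    intro y
    have h3 := pos_inner_nonneg hP₂ y
    have h4 : ⟪T₂ y, y⟫ = ⟪S y, y⟫ + ⟪P₂ y, y⟫ := by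
      simp [hT₂def, hSdef, ContinuousLinearMap.add_apply, inner_add_left]
      ring
    linarith [h4]
  set R₁ : Y →L[ℝ] Y := Ring.inverse T₁ with hR₁def
  set R₂ : Y →L[ℝ] Y := Ring.inverse T₂ with hR₂def
  have hnR₁ : ‖R₁‖ ≤ ‖Ring.inverse S‖ := inv_norm_le hSpos hUS hUT₁ hle₁
  have hnR₂ : ‖R₂‖ ≤ ‖Ring.inverse S‖ := inv_norm_le hSpos hUS hUT₂ hle₂
  -- resolvent identity
  have e1 : R₂ - R₁ = R₂ * (T₁ - T₂) * R₁ := by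
    have h1 : T₁ * R₁ = 1 := Ring.mul_inverse_cancel T₁ hUT₁
    have h2 : R₂ * T₂ = 1 := Ring.inverse_mul_cancel T₂ hUT₂
    calc R₂ - R₁ = R₂ * (T₁ * R₁) - (R₂ * T₂) * R₁ := by rw [h1, h2]; simp [mul_one, one_mul]
    _ = R₂ * (T₁ - T₂) * R₁ := by noncomm_ring
  have e2 : T₁ - T₂ = δ ^ 2 • (M ∘L (B₁ - B₂) ∘L adjoint M) := by
    rw [hT₁def, hT₂def, hP₁def, hP₂def]
    ext y
    simp [map_sub, smul_sub]
  have e3 : R₂ - R₁ = δ ^ 2 • (R₂ ∘L (M ∘L (B₁ - B₂) ∘L adjoint M) ∘L R₁) := by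
    rw [e1, e2]
    ext y
    simp [mul_apply]
  have hid : Fop A M C₀ Γ B₁ δ - Fop A M C₀ Γ B₂ δ
      = δ ^ 2 • (C₀ ∘L adjoint A ∘L R₂ ∘L M ∘L (B₁ - B₂) ∘L adjoint M ∘L R₁ ∘L A ∘L C₀) := by
    ext x
    have hu := congrFun (congrArg DFunLike.coe e3) (A (C₀ x))
    simp only [ContinuousLinearMap.sub_apply, ContinuousLinearMap.smul_apply,
      ContinuousLinearMap.comp_apply] at hu
    simp only [Fop, hT₁def, hT₂def, hP₁def, hP₂def, hQdef, hR₁def, hR₂def,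
      ContinuousLinearMap.sub_apply, ContinuousLinearMap.smul_apply,
      ContinuousLinearMap.comp_apply]
    have h6 : C₀ x - C₀ (adjoint A (R₁ (A (C₀ x)))) - (C₀ x - C₀ (adjoint A (R₂ (A (C₀ x)))))
        = C₀ (adjoint A (R₂ (A (C₀ x)) - R₁ (A (C₀ x)))) := by
      rw [map_sub, map_sub]; abel
    rw [h6, hu]
    simp [map_smul]
    rfl
  rw [hid]
  refine le_trans (opNorm_smul_le _ _) ?_
  rw [Real.norm_of_nonneg (sq_nonneg δ)]
  have hadjA : ‖(adjoint A : Y →L[ℝ] X)‖ = ‖A‖ := LinearIsometryEquiv.norm_map adjoint A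
  have hadjM : ‖(adjoint M : Y →L[ℝ] X)‖ = ‖M‖ := LinearIsometryEquiv.norm_map adjoint M
  set r : ℝ := ‖Ring.inverse S‖ with hrdef
  have hr0 : 0 ≤ r := norm_nonneg _
  have hchain : ‖C₀ ∘L adjoint A ∘L R₂ ∘L M ∘L (B₁ - B₂) ∘L adjoint M ∘L R₁ ∘L A ∘L C₀‖
      ≤ ‖C₀‖ * (‖A‖ * (‖R₂‖ * (‖M‖ * (‖B₁ - B₂‖ * (‖M‖ * (‖R₁‖ * (‖A‖ * ‖C₀‖))))))) := by
    have b1 : ‖A ∘L C₀‖ ≤ ‖A‖ * ‖C₀‖ := opNorm_comp_le _ _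
    have b2 : ‖R₁ ∘L A ∘L C₀‖ ≤ ‖R₁‖ * (‖A‖ * ‖C₀‖) :=
      (opNorm_comp_le _ _).trans (mul_le_mul_of_nonneg_left b1 (norm_nonneg _))
    have b3 : ‖adjoint M ∘L R₁ ∘L A ∘L C₀‖ ≤ ‖M‖ * (‖R₁‖ * (‖A‖ * ‖C₀‖)) := by
      refine (opNorm_comp_le _ _).trans ?_
      rw [hadjM]
      exact mul_le_mul_of_nonneg_left b2 (norm_nonneg _)
    have b4 : ‖(B₁ - B₂) ∘L adjoint M ∘L R₁ ∘L A ∘L C₀‖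
        ≤ ‖B₁ - B₂‖ * (‖M‖ * (‖R₁‖ * (‖A‖ * ‖C₀‖))) :=
      (opNorm_comp_le _ _).trans (mul_le_mul_of_nonneg_left b3 (norm_nonneg _))
    have b5 : ‖M ∘L (B₁ - B₂) ∘L adjoint M ∘L R₁ ∘L A ∘L C₀‖
        ≤ ‖M‖ * (‖B₁ - B₂‖ * (‖M‖ * (‖R₁‖ * (‖A‖ * ‖C₀‖)))) :=
      (opNorm_comp_le _ _).trans (mul_le_mul_of_nonneg_left b4 (norm_nonneg _))
    have b6 : ‖R₂ ∘L M ∘L (B₁ - B₂) ∘L adjoint M ∘L R₁ ∘L A ∘L C₀‖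
        ≤ ‖R₂‖ * (‖M‖ * (‖B₁ - B₂‖ * (‖M‖ * (‖R₁‖ * (‖A‖ * ‖C₀‖))))) :=
      (opNorm_comp_le _ _).trans (mul_le_mul_of_nonneg_left b5 (norm_nonneg _))
    have b7 : ‖adjoint A ∘L R₂ ∘L M ∘L (B₁ - B₂) ∘L adjoint M ∘L R₁ ∘L A ∘L C₀‖
        ≤ ‖A‖ * (‖R₂‖ * (‖M‖ * (‖B₁ - B₂‖ * (‖M‖ * (‖R₁‖ * (‖A‖ * ‖C₀‖)))))) := by
      refine (opNorm_comp_le _ _).trans ?_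
      rw [hadjA]
      exact mul_le_mul_of_nonneg_left b6 (norm_nonneg _)
    exact (opNorm_comp_le _ _).trans (mul_le_mul_of_nonneg_left b7 (norm_nonneg _))
  calc δ ^ 2 * ‖C₀ ∘L adjoint A ∘L R₂ ∘L M ∘L (B₁ - B₂) ∘L adjoint M ∘L R₁ ∘L A ∘L C₀‖
      ≤ δ ^ 2 * (‖C₀‖ * (‖A‖ * (‖R₂‖ * (‖M‖ * (‖B₁ - B₂‖ * (‖M‖ * (‖R₁‖ * (‖A‖ * ‖C₀‖)))))))) :=
        mul_le_mul_of_nonneg_left hchain (sq_nonneg δ)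
    _ ≤ δ ^ 2 * (‖C₀‖ * (‖A‖ * (r * (‖M‖ * (‖B₁ - B₂‖ * (‖M‖ * (r * (‖A‖ * ‖C₀‖)))))))) := by
        gcongr
    _ = (‖C₀‖ * ‖A‖ * r * ‖M‖ * δ) ^ 2 * ‖B₁ - B₂‖ := by ring
end

section
/- Let β = ‖C₀‖·‖A‖·‖(Γ + AC₀A*)⁻¹‖·‖M‖, and suppose 0 ≤ δ < 1/β. Then there exists a unique bounded self-adjoint non-negative operator C(δ) : X → X with C(δ) = F(C(δ),δ). Moreover, the sequence defined by C₀(δ) = C₀ and C_{ℓ+1}(δ) = F(C_ℓ(δ),δ) converges to C(δ) geometrically fast: ‖C_ℓ(δ) − C(δ)‖ ≤ (βδ)^{2ℓ} ‖C₀ − C(δ)‖ for all ℓ ≥ 0. -/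
open ContinuousLinearMap
open scoped RealInnerProductSpace

set_option maxHeartbeats 1000000
set_option synthInstance.maxHeartbeats 400000

section AuxLemmas
variable {E F : Type*} [NormedAddCommGroup E] [InnerProductSpace ℝ E] [CompleteSpace E]
  [NormedAddCommGroup F] [InnerProductSpace ℝ F] [CompleteSpace F]

lemma pos_cs_s3 {T : E →L[ℝ] E} (hT : T.IsPositive) (x y : E) :
    ⟪T x, y⟫ ^ 2 ≤ ⟪T x, x⟫ * ⟪T y, y⟫ := by
  have hsym : ∀ u v : E, ⟪T u, v⟫ = ⟪u, T v⟫ := fun u v => by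
    rw [← hT.isSelfAdjoint.adjoint_eq, adjoint_inner_left, hT.isSelfAdjoint.adjoint_eq]
  have key : ∀ t : ℝ, 0 ≤ ⟪T y, y⟫ * (t * t) + (2 * ⟪T x, y⟫) * t + ⟪T x, x⟫ := by
    intro t
    have h0 := hT.2 (x + t • y)
    have hexp : T.reApplyInnerSelf (x + t • y)
        = ⟪T y, y⟫ * (t * t) + (2 * ⟪T x, y⟫) * t + ⟪T x, x⟫ := by
      show ⟪T (x + t • y), x + t • y⟫ = _
      rw [map_add, map_smul]
      simp only [inner_add_left, inner_add_right, real_inner_smul_left, real_inner_smul_right]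
      have : ⟪T y, x⟫ = ⟪T x, y⟫ := by rw [hsym y x, real_inner_comm]
      rw [this]; ring
    linarith [hexp ▸ h0]
  have := discrim_le_zero key
  rw [discrim] at this
  nlinarith

lemma isUnit_of_posdef_s3 [FiniteDimensional ℝ F] (S : F →L[ℝ] F)
    (h : ∀ y : F, y ≠ 0 → 0 < ⟪S y, y⟫) : IsUnit S := by
  rw [ContinuousLinearMap.isUnit_iff_bijective]
  have hinj : Function.Injective (S : F →ₗ[ℝ] F) := by
    rw [← LinearMap.ker_eq_bot, LinearMap.ker_eq_bot']
    intro y hy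
    by_contra hy0
    have hpos := h y hy0
    have : S y = 0 := hy
    rw [this] at hpos
    simp at hpos
  exact ⟨hinj, (LinearMap.injective_iff_surjective (f := (S : F →ₗ[ℝ] F))).mp hinj⟩

lemma inverse_isPositive {R : E →L[ℝ] E} (hu : IsUnit R) (hR : R.IsPositive) :
    (Ring.inverse R).IsPositive := by
  set J := Ring.inverse R with hJ
  have h1 : R * J = 1 := Ring.mul_inverse_cancel R hu
  have h2 : J * R = 1 := Ring.inverse_mul_cancel R hu
  have hRJ : ∀ z, R (J z) = z := fun z => by
    have := DFunLike.congr_fun h1 z; simpa [mul_apply] using this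
  have hsa : IsSelfAdjoint J := by
    have hstar : star J * R = 1 := by
      have := congrArg star h1
      rwa [star_mul, star_one, hR.isSelfAdjoint.star_eq] at this
    calc star J = star J * (R * J) := by rw [h1, mul_one]
      _ = (star J * R) * J := by rw [mul_assoc]
      _ = J := by rw [hstar, one_mul]
  refine ⟨hsa.isSymmetric, fun z => ?_⟩
  show (0:ℝ) ≤ ⟪J z, z⟫
  have : ⟪J z, z⟫ = ⟪R (J z), J z⟫ := by rw [hRJ z, real_inner_comm]
  rw [this]
  exact hR.2 (J z)

lemma inverse_norm_le {T R : E →L[ℝ] E} (hT : T.IsPositive) (hR : R.IsPositive)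
    (hTu : IsUnit T) (hRu : IsUnit R)
    (hle : ∀ y, ⟪T y, y⟫ ≤ ⟪R y, y⟫) :
    ‖Ring.inverse R‖ ≤ ‖Ring.inverse T‖ := by
  set K := Ring.inverse T with hK
  set J := Ring.inverse R with hJ
  have hTK : ∀ z, T (K z) = z := fun z => by
    simpa [mul_apply] using DFunLike.congr_fun (Ring.mul_inverse_cancel T hTu) z
  have hRJ : ∀ z, R (J z) = z := fun z => by
    simpa [mul_apply] using DFunLike.congr_fun (Ring.mul_inverse_cancel R hRu) z
  refine opNorm_le_bound _ (norm_nonneg K) fun z => ?_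
  set u := J z with hu
  have step1 : ‖u‖ ^ 2 ≤ ‖K‖ * ⟪T u, u⟫ := by
    rcases eq_or_ne u 0 with h0 | h0
    · simp [h0]
    · have c2 : ⟪T (K u), u⟫ ^ 2 ≤ ⟪T (K u), K u⟫ * ⟪T u, u⟫ := pos_cs_s3 hT (K u) u
      have c1 : ⟪T (K u), u⟫ = ‖u‖ ^ 2 := by rw [hTK, real_inner_self_eq_norm_sq]
      have c3 : ⟪T (K u), K u⟫ = ⟪u, K u⟫ := by rw [hTK]
      have c4 : ⟪u, K u⟫ ≤ ‖K‖ * ‖u‖ ^ 2 := by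
        calc ⟪u, K u⟫ ≤ ‖u‖ * ‖K u‖ := real_inner_le_norm u (K u)
          _ ≤ ‖u‖ * (‖K‖ * ‖u‖) := by
              have := le_opNorm K u
              exact mul_le_mul_of_nonneg_left this (norm_nonneg u)
          _ = ‖K‖ * ‖u‖ ^ 2 := by ring
      have hTuu : 0 ≤ ⟪T u, u⟫ := hT.2 u
      have hnu : 0 < ‖u‖ ^ 2 := pow_pos (norm_pos_iff.mpr h0) 2
      rw [c1, c3] at c2
      have : (‖u‖ ^ 2) * (‖u‖ ^ 2) ≤ (‖K‖ * ⟪T u, u⟫) * ‖u‖ ^ 2 := by nlinarith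
      exact le_of_mul_le_mul_right (by linarith [this]) hnu
  have step2 : ⟪T u, u⟫ ≤ ‖z‖ * ‖u‖ := by
    calc ⟪T u, u⟫ ≤ ⟪R u, u⟫ := hle u
      _ = ⟪z, u⟫ := by rw [hu, hRJ]
      _ ≤ ‖z‖ * ‖u‖ := real_inner_le_norm z u
  rcases eq_or_ne u 0 with h0 | h0
  · have : ‖J z‖ = 0 := by rw [← hu, h0, norm_zero]
    rw [this]
    positivity
  · have hnu : 0 < ‖u‖ := norm_pos_iff.mpr h0
    have : ‖u‖ * ‖u‖ ≤ (‖K‖ * ‖z‖) * ‖u‖ := by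
      have := mul_le_mul_of_nonneg_left step2 (norm_nonneg K)
      nlinarith [step1, sq_abs ‖u‖]
    have := le_of_mul_le_mul_right this hnu
    simpa [hu] using this

lemma smul_isPositive {S : E →L[ℝ] E} (hS : S.IsPositive) {c : ℝ} (hc : 0 ≤ c) :
    (c • S).IsPositive := by
  refine ⟨?_, fun x => ?_⟩
  · have := hS.isSelfAdjoint
    refine IsSelfAdjoint.isSymmetric ?_
    rw [IsSelfAdjoint] at *
    rw [star_smul, star_trivial, this]
  · show (0:ℝ) ≤ ⟪(c • S) x, x⟫
    rw [smul_apply, real_inner_smul_left]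
    exact mul_nonneg hc (hS.2 x)

end AuxLemmas

/-- The covariance iterates `C₀(δ) = C₀`, `C_{ℓ+1}(δ) = F(C_ℓ(δ),δ)`. -/
noncomputable def covIter {X Y : Type*}
    [NormedAddCommGroup X] [InnerProductSpace ℝ X] [CompleteSpace X]
    [NormedAddCommGroup Y] [InnerProductSpace ℝ Y] [FiniteDimensional ℝ Y]
    (A M : X →L[ℝ] Y) (C₀ : X →L[ℝ] X) (Γ : Y →L[ℝ] Y) (δ : ℝ) : ℕ → (X →L[ℝ] X)
  | 0 => C₀
  | (n + 1) => Fop A M C₀ Γ (covIter A M C₀ Γ δ n) δ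

section Core
variable {X Y : Type*}
    [NormedAddCommGroup X] [InnerProductSpace ℝ X] [CompleteSpace X]
    [NormedAddCommGroup Y] [InnerProductSpace ℝ Y] [FiniteDimensional ℝ Y]
    (A M : X →L[ℝ] Y) (C₀ : X →L[ℝ] X) (Γ : Y →L[ℝ] Y)

variable {B B₁ B₂ : X →L[ℝ] X} {δ : ℝ}

lemma Rop_isPositive (hC₀ : C₀.IsPositive) (hΓ : Γ.IsPositive) (hB : B.IsPositive) :
    (Γ + δ ^ 2 • (M ∘L B ∘L adjoint M) + A ∘L C₀ ∘L adjoint A).IsPositive :=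
  (hΓ.add (smul_isPositive (hB.conj_adjoint M) (sq_nonneg δ))).add (hC₀.conj_adjoint A)

lemma Rop_isUnit (hC₀ : C₀.IsPositive) (hΓpos : ∀ y : Y, y ≠ 0 → 0 < ⟪Γ y, y⟫)
    (hB : B.IsPositive) :
    IsUnit (Γ + δ ^ 2 • (M ∘L B ∘L adjoint M) + A ∘L C₀ ∘L adjoint A) := by
  refine isUnit_of_posdef_s3 _ fun y hy => ?_
  have h1 : (0:ℝ) ≤ ⟪(δ ^ 2 • (M ∘L B ∘L adjoint M)) y, y⟫ :=
    (smul_isPositive (hB.conj_adjoint M) (sq_nonneg δ)).2 y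
  have h2 : (0:ℝ) ≤ ⟪(A ∘L C₀ ∘L adjoint A) y, y⟫ := (hC₀.conj_adjoint A).2 y
  have h0 := hΓpos y hy
  simp only [add_apply, inner_add_left]
  linarith

lemma Top_isUnit (hC₀ : C₀.IsPositive) (hΓpos : ∀ y : Y, y ≠ 0 → 0 < ⟪Γ y, y⟫) :
    IsUnit (Γ + A ∘L C₀ ∘L adjoint A) := by
  refine isUnit_of_posdef_s3 _ fun y hy => ?_
  have h2 : (0:ℝ) ≤ ⟪(A ∘L C₀ ∘L adjoint A) y, y⟫ := (hC₀.conj_adjoint A).2 y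
  have h0 := hΓpos y hy
  simp only [add_apply, inner_add_left]
  linarith

lemma Jop_norm_le (hC₀ : C₀.IsPositive) (hΓ : Γ.IsPositive)
    (hΓpos : ∀ y : Y, y ≠ 0 → 0 < ⟪Γ y, y⟫) (hB : B.IsPositive) :
    ‖Ring.inverse (Γ + δ ^ 2 • (M ∘L B ∘L adjoint M) + A ∘L C₀ ∘L adjoint A)‖
      ≤ ‖Ring.inverse (Γ + A ∘L C₀ ∘L adjoint A)‖ := by
  refine inverse_norm_le (hΓ.add (hC₀.conj_adjoint A)) (Rop_isPositive A M C₀ Γ hC₀ hΓ hB)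
    (Top_isUnit A C₀ Γ hC₀ hΓpos) (Rop_isUnit A M C₀ Γ hC₀ hΓpos hB) fun y => ?_
  have h1 : (0:ℝ) ≤ ⟪(δ ^ 2 • (M ∘L B ∘L adjoint M)) y, y⟫ :=
    (smul_isPositive (hB.conj_adjoint M) (sq_nonneg δ)).2 y
  simp only [add_apply, inner_add_left]
  linarith

lemma Fop_isPositive (hC₀ : C₀.IsPositive) (hΓ : Γ.IsPositive)
    (hΓpos : ∀ y : Y, y ≠ 0 → 0 < ⟪Γ y, y⟫) (hB : B.IsPositive) :
    (Fop A M C₀ Γ B δ).IsPositive := by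
  set R := Γ + δ ^ 2 • (M ∘L B ∘L adjoint M) + A ∘L C₀ ∘L adjoint A with hRdef
  have hsmul : (δ ^ 2 • (M ∘L B ∘L adjoint M)).IsPositive :=
    smul_isPositive (hB.conj_adjoint M) (sq_nonneg δ)
  have hW : (A ∘L C₀ ∘L adjoint A).IsPositive := hC₀.conj_adjoint A
  have hRpos : R.IsPositive := (hΓ.add hsmul).add hW
  have hRu : IsUnit R := Rop_isUnit A M C₀ Γ hC₀ hΓpos hB
  set J := Ring.inverse R with hJdef
  have hJpos : J.IsPositive := inverse_isPositive hRu hRpos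
  have hRJ : ∀ z, R (J z) = z := fun z => by
    simpa [mul_apply] using DFunLike.congr_fun (Ring.mul_inverse_cancel R hRu) z
  have hsymC : ∀ u v : X, ⟪C₀ u, v⟫ = ⟪u, C₀ v⟫ := fun u v => by
    rw [← hC₀.isSelfAdjoint.adjoint_eq, adjoint_inner_left, hC₀.isSelfAdjoint.adjoint_eq]
  constructor
  · have h1 : adjoint ((C₀ ∘L adjoint A ∘L J) ∘L A ∘L C₀)
        = (C₀ ∘L adjoint A ∘L J) ∘L A ∘L C₀ := by
      simp only [adjoint_comp, adjoint_adjoint, hC₀.isSelfAdjoint.adjoint_eq, hJpos.isSelfAdjoint.adjoint_eq]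
      ext x
      simp [comp_apply]
    have h2 : IsSelfAdjoint ((C₀ ∘L adjoint A ∘L J) ∘L A ∘L C₀) := h1
    exact (hC₀.isSelfAdjoint.sub h2).isSymmetric
  · intro x
    show (0:ℝ) ≤ ⟪(Fop A M C₀ Γ B δ) x, x⟫
    have hFx : (Fop A M C₀ Γ B δ) x = C₀ x - C₀ (adjoint A (J (A (C₀ x)))) := by
      simp [Fop, sub_apply, comp_apply, ← hRdef, ← hJdef]
    rw [hFx, inner_sub_left]
    set z := A (C₀ x) with hzdef
    set w := adjoint A (J z) with hwdef
    have ht0 : (0:ℝ) ≤ ⟪J z, z⟫ := hJpos.2 z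
    have hGx : ⟪C₀ w, x⟫ = ⟪J z, z⟫ := by
      rw [hsymC w x, hwdef, adjoint_inner_left]
    have hCww : ⟪C₀ w, w⟫ ≤ ⟪J z, z⟫ := by
      have e1 : ⟪C₀ w, w⟫ = ⟪(A ∘L C₀ ∘L adjoint A) (J z), J z⟫ := by
        rw [real_inner_comm]
        rw [hwdef]
        rw [show ⟪adjoint A (J z), C₀ (adjoint A (J z))⟫
            = ⟪J z, A (C₀ (adjoint A (J z)))⟫ from by
          rw [real_inner_comm, ← adjoint_inner_left A, real_inner_comm]]
        simp [comp_apply]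
        rw [real_inner_comm]
      have e2 : R (J z) = (Γ + δ ^ 2 • (M ∘L B ∘L adjoint M)) (J z)
          + (A ∘L C₀ ∘L adjoint A) (J z) := by
        rw [hRdef]; simp [add_apply]
      have e3 : (0:ℝ) ≤ ⟪(Γ + δ ^ 2 • (M ∘L B ∘L adjoint M)) (J z), J z⟫ :=
        (hΓ.add hsmul).2 (J z)
      have e4 : ⟪(A ∘L C₀ ∘L adjoint A) (J z), J z⟫ ≤ ⟪R (J z), J z⟫ := by
        rw [e2, inner_add_left]; linarith
      rw [e1]
      calc ⟪(A ∘L C₀ ∘L adjoint A) (J z), J z⟫ ≤ ⟪R (J z), J z⟫ := e4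
        _ = ⟪z, J z⟫ := by rw [hRJ]
        _ = ⟪J z, z⟫ := real_inner_comm _ _
    have hcs := pos_cs_s3 hC₀ w x
    have hCxx : (0:ℝ) ≤ ⟪C₀ x, x⟫ := hC₀.2 x
    rw [hGx] at hcs ⊢
    rcases ht0.eq_or_lt with h | h
    · rw [← h]; linarith
    · nlinarith

end Core

section Core2
variable {X Y : Type*}
    [NormedAddCommGroup X] [InnerProductSpace ℝ X] [CompleteSpace X]
    [NormedAddCommGroup Y] [InnerProductSpace ℝ Y] [FiniteDimensional ℝ Y]
    (A M : X →L[ℝ] Y) (C₀ : X →L[ℝ] X) (Γ : Y →L[ℝ] Y)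

variable {B B₁ B₂ : X →L[ℝ] X} {δ : ℝ}

lemma Fop_sub_eq (hC₀ : C₀.IsPositive) (hΓpos : ∀ y : Y, y ≠ 0 → 0 < ⟪Γ y, y⟫)
    (h₁ : B₁.IsPositive) (h₂ : B₂.IsPositive) :
    Fop A M C₀ Γ B₁ δ - Fop A M C₀ Γ B₂ δ
      = δ ^ 2 • ((C₀ ∘L adjoint A
            ∘L Ring.inverse (Γ + δ ^ 2 • (M ∘L B₂ ∘L adjoint M) + A ∘L C₀ ∘L adjoint A) ∘L M)
          ∘L (B₁ - B₂)
          ∘L (adjoint M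
            ∘L Ring.inverse (Γ + δ ^ 2 • (M ∘L B₁ ∘L adjoint M) + A ∘L C₀ ∘L adjoint A)
            ∘L A ∘L C₀)) := by
  set R₁ := Γ + δ ^ 2 • (M ∘L B₁ ∘L adjoint M) + A ∘L C₀ ∘L adjoint A with hR₁def
  set R₂ := Γ + δ ^ 2 • (M ∘L B₂ ∘L adjoint M) + A ∘L C₀ ∘L adjoint A with hR₂def
  have hu₁ : IsUnit R₁ := Rop_isUnit A M C₀ Γ hC₀ hΓpos h₁
  have hu₂ : IsUnit R₂ := Rop_isUnit A M C₀ Γ hC₀ hΓpos h₂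
  set J₁ := Ring.inverse R₁ with hJ₁def
  set J₂ := Ring.inverse R₂ with hJ₂def
  have hR₁J : ∀ v, R₁ (J₁ v) = v := fun v => by
    simpa [mul_apply] using DFunLike.congr_fun (Ring.mul_inverse_cancel R₁ hu₁) v
  have hJ₂R : ∀ v, J₂ (R₂ v) = v := fun v => by
    simpa [mul_apply] using DFunLike.congr_fun (Ring.inverse_mul_cancel R₂ hu₂) v
  ext x
  set z := A (C₀ x) with hzdef
  have hdiffJ : J₂ z - J₁ z = δ ^ 2 • (J₂ (M ((B₁ - B₂) (adjoint M (J₁ z))))) := by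
    have e3 : R₁ (J₁ z) - R₂ (J₁ z) = δ ^ 2 • (M ((B₁ - B₂) (adjoint M (J₁ z)))) := by
      rw [hR₁def, hR₂def]
      simp only [add_apply, smul_apply, comp_apply, sub_apply, map_sub, smul_sub]
      abel
    calc J₂ z - J₁ z = J₂ (R₁ (J₁ z)) - J₂ (R₂ (J₁ z)) := by rw [hR₁J z, hJ₂R (J₁ z)]
      _ = J₂ (R₁ (J₁ z) - R₂ (J₁ z)) := (map_sub J₂ _ _).symm
      _ = δ ^ 2 • (J₂ (M ((B₁ - B₂) (adjoint M (J₁ z))))) := by rw [e3, map_smul]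
  have lhs : (Fop A M C₀ Γ B₁ δ - Fop A M C₀ Γ B₂ δ) x
      = C₀ (adjoint A (J₂ z)) - C₀ (adjoint A (J₁ z)) := by
    simp only [Fop, sub_apply, comp_apply, ← hR₁def, ← hR₂def, ← hJ₁def, ← hJ₂def, ← hzdef]
    abel
  rw [lhs, ← map_sub, ← map_sub, hdiffJ, map_smul, map_smul]
  simp only [smul_apply, comp_apply, sub_apply]
  rfl

lemma Fop_lip (hC₀ : C₀.IsPositive) (hΓ : Γ.IsPositive)
    (hΓpos : ∀ y : Y, y ≠ 0 → 0 < ⟪Γ y, y⟫)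
    (h₁ : B₁.IsPositive) (h₂ : B₂.IsPositive) :
    ‖Fop A M C₀ Γ B₁ δ - Fop A M C₀ Γ B₂ δ‖
      ≤ δ ^ 2 * (‖C₀‖ * ‖A‖ * ‖Ring.inverse (Γ + A ∘L C₀ ∘L adjoint A)‖ * ‖M‖) ^ 2
        * ‖B₁ - B₂‖ := by
  set K := Ring.inverse (Γ + A ∘L C₀ ∘L adjoint A) with hKdef
  set J₁ := Ring.inverse (Γ + δ ^ 2 • (M ∘L B₁ ∘L adjoint M) + A ∘L C₀ ∘L adjoint A) with hJ₁def
  set J₂ := Ring.inverse (Γ + δ ^ 2 • (M ∘L B₂ ∘L adjoint M) + A ∘L C₀ ∘L adjoint A) with hJ₂def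
  have hJ₁le : ‖J₁‖ ≤ ‖K‖ := Jop_norm_le A M C₀ Γ hC₀ hΓ hΓpos h₁
  have hJ₂le : ‖J₂‖ ≤ ‖K‖ := Jop_norm_le A M C₀ Γ hC₀ hΓ hΓpos h₂
  have hadjA : ‖adjoint A‖ = ‖A‖ := LinearIsometryEquiv.norm_map adjoint A
  have hadjM : ‖adjoint M‖ = ‖M‖ := LinearIsometryEquiv.norm_map adjoint M
  have hP : ‖C₀ ∘L adjoint A ∘L J₂ ∘L M‖ ≤ ‖C₀‖ * (‖A‖ * (‖K‖ * ‖M‖)) := by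
    calc ‖C₀ ∘L adjoint A ∘L J₂ ∘L M‖ ≤ ‖C₀‖ * ‖adjoint A ∘L J₂ ∘L M‖ := opNorm_comp_le _ _
      _ ≤ ‖C₀‖ * (‖adjoint A‖ * ‖J₂ ∘L M‖) :=
          mul_le_mul_of_nonneg_left (opNorm_comp_le _ _) (norm_nonneg _)
      _ ≤ ‖C₀‖ * (‖adjoint A‖ * (‖J₂‖ * ‖M‖)) :=
          mul_le_mul_of_nonneg_left
            (mul_le_mul_of_nonneg_left (opNorm_comp_le _ _) (norm_nonneg _)) (norm_nonneg _)
      _ ≤ ‖C₀‖ * (‖A‖ * (‖K‖ * ‖M‖)) := by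
          rw [hadjA]; gcongr
  have hQ : ‖adjoint M ∘L J₁ ∘L A ∘L C₀‖ ≤ ‖M‖ * (‖K‖ * (‖A‖ * ‖C₀‖)) := by
    calc ‖adjoint M ∘L J₁ ∘L A ∘L C₀‖ ≤ ‖adjoint M‖ * ‖J₁ ∘L A ∘L C₀‖ := opNorm_comp_le _ _
      _ ≤ ‖adjoint M‖ * (‖J₁‖ * ‖A ∘L C₀‖) :=
          mul_le_mul_of_nonneg_left (opNorm_comp_le _ _) (norm_nonneg _)
      _ ≤ ‖adjoint M‖ * (‖J₁‖ * (‖A‖ * ‖C₀‖)) :=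
          mul_le_mul_of_nonneg_left
            (mul_le_mul_of_nonneg_left (opNorm_comp_le _ _) (norm_nonneg _)) (norm_nonneg _)
      _ ≤ ‖M‖ * (‖K‖ * (‖A‖ * ‖C₀‖)) := by
          rw [hadjM]; gcongr
  rw [Fop_sub_eq A M C₀ Γ hC₀ hΓpos h₁ h₂, ← hJ₁def, ← hJ₂def]
  calc ‖δ ^ 2 • ((C₀ ∘L adjoint A ∘L J₂ ∘L M) ∘L (B₁ - B₂) ∘L (adjoint M ∘L J₁ ∘L A ∘L C₀))‖
      = δ ^ 2 * ‖(C₀ ∘L adjoint A ∘L J₂ ∘L M) ∘L (B₁ - B₂) ∘L (adjoint M ∘L J₁ ∘L A ∘L C₀)‖ := by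
        rw [norm_smul (δ ^ 2) ((C₀ ∘L adjoint A ∘L J₂ ∘L M) ∘L (B₁ - B₂)
          ∘L (adjoint M ∘L J₁ ∘L A ∘L C₀)), Real.norm_eq_abs, abs_of_nonneg (sq_nonneg δ)]
    _ ≤ δ ^ 2 * (‖C₀ ∘L adjoint A ∘L J₂ ∘L M‖
          * (‖B₁ - B₂‖ * ‖adjoint M ∘L J₁ ∘L A ∘L C₀‖)) := by
        refine mul_le_mul_of_nonneg_left ?_ (sq_nonneg δ)
        calc ‖(C₀ ∘L adjoint A ∘L J₂ ∘L M) ∘L (B₁ - B₂) ∘L (adjoint M ∘L J₁ ∘L A ∘L C₀)‖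
            ≤ ‖C₀ ∘L adjoint A ∘L J₂ ∘L M‖ * ‖(B₁ - B₂) ∘L (adjoint M ∘L J₁ ∘L A ∘L C₀)‖ :=
              opNorm_comp_le _ _
          _ ≤ ‖C₀ ∘L adjoint A ∘L J₂ ∘L M‖ * (‖B₁ - B₂‖ * ‖adjoint M ∘L J₁ ∘L A ∘L C₀‖) :=
              mul_le_mul_of_nonneg_left (opNorm_comp_le _ _) (norm_nonneg _)
    _ ≤ δ ^ 2 * ((‖C₀‖ * (‖A‖ * (‖K‖ * ‖M‖))) * (‖B₁ - B₂‖ * (‖M‖ * (‖K‖ * (‖A‖ * ‖C₀‖))))) := by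
        refine mul_le_mul_of_nonneg_left ?_ (sq_nonneg δ)
        gcongr
    _ = δ ^ 2 * (‖C₀‖ * ‖A‖ * ‖K‖ * ‖M‖) ^ 2 * ‖B₁ - B₂‖ := by ring

end Core2

/-- For `β = ‖C₀‖·‖A‖·‖(Γ + A C₀ A*)⁻¹‖·‖M‖` and `0 ≤ δ < 1/β`, there is a unique bounded
self-adjoint non-negative operator `C(δ)` with `C(δ) = F(C(δ),δ)`, and the iterates
`C₀(δ) = C₀`, `C_{ℓ+1}(δ) = F(C_ℓ(δ),δ)` converge to it geometrically fast:
`‖C_ℓ(δ) − C(δ)‖ ≤ (βδ)^{2ℓ} ‖C₀ − C(δ)‖` for all `ℓ ≥ 0`. -/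
theorem stmt_3 {X Y : Type*}
    [NormedAddCommGroup X] [InnerProductSpace ℝ X] [CompleteSpace X]
    [NormedAddCommGroup Y] [InnerProductSpace ℝ Y] [FiniteDimensional ℝ Y]
    (A M : X →L[ℝ] Y) (C₀ : X →L[ℝ] X) (Γ : Y →L[ℝ] Y)
    (hC₀ : C₀.IsPositive) (hΓ : Γ.IsPositive)
    (hΓpos : ∀ y : Y, y ≠ 0 → 0 < ⟪Γ y, y⟫)
    (β : ℝ)
    (hβ : β = ‖C₀‖ * ‖A‖ * ‖Ring.inverse (Γ + A ∘L C₀ ∘L adjoint A)‖ * ‖M‖)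
    (δ : ℝ) (hδ0 : 0 ≤ δ) (hδ1 : β * δ < 1) :
    (∃! C : X →L[ℝ] X, C.IsPositive ∧ Fop A M C₀ Γ C δ = C) ∧
      ∀ C : X →L[ℝ] X, C.IsPositive → Fop A M C₀ Γ C δ = C →
        ∀ ℓ : ℕ, ‖covIter A M C₀ Γ δ ℓ - C‖ ≤ (β * δ) ^ (2 * ℓ) * ‖C₀ - C‖ := by
  have hβ0 : 0 ≤ β := by rw [hβ]; positivity
  have hβδ0 : 0 ≤ β * δ := mul_nonneg hβ0 hδ0
  have hK0 : (0:ℝ) ≤ (β * δ) ^ 2 := sq_nonneg _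
  have hK1 : (β * δ) ^ 2 < 1 := by nlinarith
  have lip : ∀ {B₁ B₂ : X →L[ℝ] X}, B₁.IsPositive → B₂.IsPositive →
      ‖Fop A M C₀ Γ B₁ δ - Fop A M C₀ Γ B₂ δ‖ ≤ (β * δ) ^ 2 * ‖B₁ - B₂‖ := by
    intro B₁ B₂ h₁ h₂
    have h := Fop_lip A M C₀ Γ hC₀ hΓ hΓpos h₁ h₂ (δ := δ)
    have e : (β * δ) ^ 2 * ‖B₁ - B₂‖
        = δ ^ 2 * (‖C₀‖ * ‖A‖ * ‖Ring.inverse (Γ + A ∘L C₀ ∘L adjoint A)‖ * ‖M‖) ^ 2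
          * ‖B₁ - B₂‖ := by rw [hβ]; ring
    rw [e]; exact h
  have hiter : ∀ ℓ, (covIter A M C₀ Γ δ ℓ).IsPositive := by
    intro ℓ
    induction ℓ with
    | zero => exact hC₀
    | succ n ih => exact Fop_isPositive A M C₀ Γ hC₀ hΓ hΓpos ih
  -- the set of positive operators is closed
  have hclosed : IsClosed {C : X →L[ℝ] X | C.IsPositive} := by
    have h1 : IsClosed {C : X →L[ℝ] X | adjoint C = C} :=
      isClosed_eq (LinearIsometryEquiv.continuous adjoint) continuous_id
    have h2 : ∀ x : X, IsClosed {C : X →L[ℝ] X | 0 ≤ ⟪C x, x⟫} := fun x =>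
      isClosed_le continuous_const ((continuous_id.clm_apply continuous_const).inner
        continuous_const)
    have hset : {C : X →L[ℝ] X | C.IsPositive}
        = {C : X →L[ℝ] X | adjoint C = C} ∩ ⋂ x : X, {C : X →L[ℝ] X | 0 ≤ ⟪C x, x⟫} := by
      ext C
      simp only [Set.mem_setOf_eq, Set.mem_inter_iff, Set.mem_iInter]
      constructor
      · exact fun h => ⟨h.isSelfAdjoint.adjoint_eq, fun x => h.2 x⟩
      · exact fun h => ⟨(isSelfAdjoint_iff'.mpr h.1).isSymmetric, fun x => h.2 x⟩
    rw [hset]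
    exact h1.inter (isClosed_iInter h2)
  haveI : CompleteSpace {C : X →L[ℝ] X // C.IsPositive} :=
    hclosed.completeSpace_coe
  haveI : Nonempty {C : X →L[ℝ] X // C.IsPositive} := ⟨⟨C₀, hC₀⟩⟩
  set f : {C : X →L[ℝ] X // C.IsPositive} → {C : X →L[ℝ] X // C.IsPositive} :=
    fun C => ⟨Fop A M C₀ Γ C.1 δ, Fop_isPositive A M C₀ Γ hC₀ hΓ hΓpos C.2⟩ with hfdef
  have hcontr : ContractingWith ⟨(β * δ) ^ 2, hK0⟩ f := by
    constructor
    · exact_mod_cast hK1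
    · refine LipschitzWith.of_dist_le_mul fun a b => ?_
      simp only [Subtype.dist_eq, dist_eq_norm]
      exact lip a.2 b.2
  set Cf := ContractingWith.fixedPoint f hcontr with hCfdef
  have hfix : Fop A M C₀ Γ Cf.1 δ = Cf.1 :=
    congrArg Subtype.val hcontr.fixedPoint_isFixedPt
  have huniq : ∀ C C' : X →L[ℝ] X, C.IsPositive → C'.IsPositive →
      Fop A M C₀ Γ C δ = C → Fop A M C₀ Γ C' δ = C' → C = C' := by
    intro C C' hC hC' hfC hfC'
    have h := lip hC hC'
    rw [hfC, hfC'] at h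
    by_contra hne
    have hpos : 0 < ‖C - C'‖ := by
      rw [norm_pos_iff]
      exact sub_ne_zero_of_ne hne
    nlinarith
  refine ⟨⟨Cf.1, ⟨Cf.2, hfix⟩, fun C' h' => huniq C' Cf.1 h'.1 Cf.2 h'.2 hfix⟩, ?_⟩
  intro C hCpos hCfix ℓ
  induction ℓ with
  | zero => simp [covIter]
  | succ n ih =>
    have hstep : covIter A M C₀ Γ δ (n + 1) = Fop A M C₀ Γ (covIter A M C₀ Γ δ n) δ := rfl
    calc ‖covIter A M C₀ Γ δ (n + 1) - C‖
        = ‖Fop A M C₀ Γ (covIter A M C₀ Γ δ n) δ - Fop A M C₀ Γ C δ‖ := by rw [hstep, hCfix]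
      _ ≤ (β * δ) ^ 2 * ‖covIter A M C₀ Γ δ n - C‖ := lip (hiter n) hCpos
      _ ≤ (β * δ) ^ 2 * ((β * δ) ^ (2 * n) * ‖C₀ - C‖) := by
          exact mul_le_mul_of_nonneg_left ih hK0
      _ = (β * δ) ^ (2 * (n + 1)) * ‖C₀ - C‖ := by ring
end

section
/- Define the exact posterior covariance C_post = C₀ − C₀A*(Γ + AC₀A*)⁻¹AC₀. Then for every bounded self-adjoint non-negative operator B : X → X and every δ ∈ ℝ one has C_post ≤ F(B,δ) in the sense of quadratic forms (i.e. F(B,δ) − C_post is non-negative). Consequently, any bounded self-adjoint non-negative fixed point C(δ) of F(·,δ) satisfies C(δ) ≥ C_post; in particular, if C₀ is positive and Γ is positive definite so that C_post is positive, then the limiting covariance C(δ) remains positive (non-degenerate). -/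
open ContinuousLinearMap
open scoped RealInnerProductSpace

/-- The exact posterior covariance `C_post = C₀ − C₀ A* (Γ + A C₀ A*)⁻¹ A C₀`. -/
noncomputable def Cpost {X Y : Type*}
    [NormedAddCommGroup X] [InnerProductSpace ℝ X] [CompleteSpace X]
    [NormedAddCommGroup Y] [InnerProductSpace ℝ Y] [FiniteDimensional ℝ Y]
    (A : X →L[ℝ] Y) (C₀ : X →L[ℝ] X) (Γ : Y →L[ℝ] Y) : X →L[ℝ] X :=
  C₀ - (C₀ ∘L (adjoint A) ∘L
    Ring.inverse (Γ + A ∘L C₀ ∘L adjoint A)) ∘L A ∘L C₀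

section Aux

variable {Y : Type*} [NormedAddCommGroup Y] [InnerProductSpace ℝ Y] [FiniteDimensional ℝ Y]

lemma aux_isUnit_of_posdef (S : Y →L[ℝ] Y) (h : ∀ y : Y, y ≠ 0 → 0 < ⟪S y, y⟫) :
    IsUnit S := by
  have hinj : Function.Injective S := by
    intro a b hab
    by_contra hne
    have h0 : S (a - b) = 0 := by simp [map_sub, hab]
    have := h (a - b) (sub_ne_zero.mpr hne)
    rw [h0] at this
    simp at this
  have hsurj : Function.Surjective (S : Y →ₗ[ℝ] Y) :=
    (LinearMap.injective_iff_surjective (f := (S : Y →ₗ[ℝ] Y))).mp hinj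
  let e : Y ≃ₗ[ℝ] Y := LinearEquiv.ofBijective (S : Y →ₗ[ℝ] Y) ⟨hinj, hsurj⟩
  let e' : Y ≃L[ℝ] Y := e.toContinuousLinearEquiv
  have hid : ∀ z, e' z = S z := fun z => rfl
  refine isUnit_iff_exists.mpr ⟨e'.symm.toContinuousLinearMap, ?_, ?_⟩
  · ext y
    show S (e'.symm y) = y
    rw [← hid]
    exact e'.apply_symm_apply y
  · ext y
    show e'.symm (S y) = y
    rw [← hid]
    exact e'.symm_apply_apply y

lemma aux_inverse_apply_cancel (S : Y →L[ℝ] Y) (hU : IsUnit S) (y : Y) :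
    S (Ring.inverse S y) = y := by
  have h := Ring.mul_inverse_cancel S hU
  calc S (Ring.inverse S y) = (S * Ring.inverse S) y := rfl
    _ = y := by rw [h]; rfl

lemma aux_inverse_sub_inverse_isPositive (S D : Y →L[ℝ] Y)
    (hS : S.IsPositive) (hSpd : ∀ y : Y, y ≠ 0 → 0 < ⟪S y, y⟫) (hD : D.IsPositive) :
    (Ring.inverse S - Ring.inverse (S + D)).IsPositive := by
  have hTpd : ∀ y : Y, y ≠ 0 → 0 < ⟪(S + D) y, y⟫ := by
    intro y hy
    have h1 := hSpd y hy
    have h2 : (0 : ℝ) ≤ ⟪D y, y⟫ := by simpa using hD.inner_nonneg_left y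
    simp only [ContinuousLinearMap.add_apply, inner_add_left]
    linarith
  have hUS : IsUnit S := aux_isUnit_of_posdef S hSpd
  have hUT : IsUnit (S + D) := aux_isUnit_of_posdef _ hTpd
  have hSsa : IsSelfAdjoint S := hS.isSelfAdjoint
  have hTsa : IsSelfAdjoint (S + D) := hSsa.add hD.isSelfAdjoint
  have hsa : IsSelfAdjoint (Ring.inverse S - Ring.inverse (S + D)) := by
    have h1 : IsSelfAdjoint (Ring.inverse S) := by
      unfold IsSelfAdjoint
      rw [← Ring.inverse_star, hSsa.star_eq]
    have h2 : IsSelfAdjoint (Ring.inverse (S + D)) := by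
      unfold IsSelfAdjoint
      rw [← Ring.inverse_star, hTsa.star_eq]
    exact h1.sub h2
  refine ⟨hsa.isSymmetric, fun y => ?_⟩
  rw [reApplyInnerSelf_apply]
  set u := Ring.inverse S y with hu
  set v := Ring.inverse (S + D) y with hv
  have hSu : S u = y := aux_inverse_apply_cancel S hUS y
  have hTv : (S + D) v = y := aux_inverse_apply_cancel _ hUT y
  have hSv : S v = y - D v := by
    have : S v + D v = y := by rw [← hTv]; rfl
    linear_combination (norm := module) this
  have hsymm := hSsa.isSymmetric
  have key : ⟪u, y⟫ - ⟪v, y⟫ = ⟪S (u - v), u - v⟫ + ⟪D v, v⟫ := by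
    have e1 : ⟪S (u - v), u - v⟫
        = ⟪S u, u⟫ - ⟪S u, v⟫ - ⟪S v, u⟫ + ⟪S v, v⟫ := by
      simp [map_sub, inner_sub_left, inner_sub_right]
      ring
    have e2 : ⟪S v, u⟫ = ⟪v, S u⟫ := hsymm v u
    rw [e1, hSu, e2, hSu, hSv, inner_sub_left]
    have c1 : ⟪u, y⟫ = ⟪y, u⟫ := real_inner_comm y u
    have c2 : ⟪v, y⟫ = ⟪y, v⟫ := real_inner_comm y v
    have c3 : ⟪D v, v⟫ = ⟪v, D v⟫ := real_inner_comm v _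
    linarith
  have h1 : (0 : ℝ) ≤ ⟪S (u - v), u - v⟫ := by
    have := hS.inner_nonneg_left (u - v)
    simpa using this
  have h2 : (0 : ℝ) ≤ ⟪D v, v⟫ := by
    have := hD.inner_nonneg_left v
    simpa using this
  have : (0 : ℝ) ≤ ⟪u, y⟫ - ⟪v, y⟫ := by linarith
  simpa [ContinuousLinearMap.sub_apply, inner_sub_left] using this

end Aux

/-- `C_post ≤ F(B,δ)` in the sense of quadratic forms; consequently any self-adjoint
non-negative fixed point `C(δ)` of `F(·,δ)` satisfies `C(δ) ≥ C_post`, and if `C_post` is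
positive definite then so is `C(δ)`. -/
theorem stmt_4 {X Y : Type*}
    [NormedAddCommGroup X] [InnerProductSpace ℝ X] [CompleteSpace X]
    [NormedAddCommGroup Y] [InnerProductSpace ℝ Y] [FiniteDimensional ℝ Y]
    (A M : X →L[ℝ] Y) (C₀ : X →L[ℝ] X) (Γ : Y →L[ℝ] Y)
    (hC₀ : C₀.IsPositive) (hΓ : Γ.IsPositive)
    (hΓpos : ∀ y : Y, y ≠ 0 → 0 < ⟪Γ y, y⟫) :
    (∀ (B : X →L[ℝ] X), B.IsPositive → ∀ δ : ℝ,
        (Fop A M C₀ Γ B δ - Cpost A C₀ Γ).IsPositive) ∧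
    (∀ (C : X →L[ℝ] X) (δ : ℝ), C.IsPositive → Fop A M C₀ Γ C δ = C →
        (C - Cpost A C₀ Γ).IsPositive) ∧
    (∀ (C : X →L[ℝ] X) (δ : ℝ), C.IsPositive → Fop A M C₀ Γ C δ = C →
        (∀ x : X, x ≠ 0 → 0 < ⟪Cpost A C₀ Γ x, x⟫) →
        ∀ x : X, x ≠ 0 → 0 < ⟪C x, x⟫) := by
  have part1 : ∀ (B : X →L[ℝ] X), B.IsPositive → ∀ δ : ℝ,
      (Fop A M C₀ Γ B δ - Cpost A C₀ Γ).IsPositive := by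
    intro B hB δ
    set Sop : Y →L[ℝ] Y := Γ + A ∘L C₀ ∘L adjoint A with hSop
    set Dop : Y →L[ℝ] Y := δ ^ 2 • (M ∘L B ∘L adjoint M) with hDop
    have hAC : (A ∘L C₀ ∘L adjoint A).IsPositive := hC₀.conj_adjoint A
    have hSpos : Sop.IsPositive := hΓ.add hAC
    have hSpd : ∀ y : Y, y ≠ 0 → 0 < ⟪Sop y, y⟫ := by
      intro y hy
      have h1 := hΓpos y hy
      have h2 : (0 : ℝ) ≤ ⟪(A ∘L C₀ ∘L adjoint A) y, y⟫ := by
        simpa using hAC.inner_nonneg_left y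
      simp only [hSop, ContinuousLinearMap.add_apply, inner_add_left]
      linarith
    have hMBM : (M ∘L B ∘L adjoint M).IsPositive := hB.conj_adjoint M
    have hDpos : Dop.IsPositive := by
      refine ⟨(IsSelfAdjoint.smul (star_trivial _) hMBM.isSelfAdjoint).isSymmetric, fun y => ?_⟩
      rw [reApplyInnerSelf_apply]
      have hnn : (0 : ℝ) ≤ ⟪(M ∘L B ∘L adjoint M) y, y⟫ := by
        simpa using hMBM.inner_nonneg_left y
      simp only [hDop, ContinuousLinearMap.smul_apply, real_inner_smul_left,
        RCLike.re_to_real]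
      exact mul_nonneg (by positivity) hnn
    have harg : Γ + δ ^ 2 • (M ∘L B ∘L adjoint M) + A ∘L C₀ ∘L adjoint A = Sop + Dop := by
      rw [hSop, hDop]; abel
    have hadj : adjoint (C₀ ∘L adjoint A) = A ∘L C₀ := by
      rw [adjoint_comp, adjoint_adjoint, ← ContinuousLinearMap.star_eq_adjoint,
        hC₀.isSelfAdjoint.star_eq]
    have heq : Fop A M C₀ Γ B δ - Cpost A C₀ Γ
        = (C₀ ∘L adjoint A) ∘L (Ring.inverse Sop - Ring.inverse (Sop + Dop)) ∘L
          adjoint (C₀ ∘L adjoint A) := by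
      rw [hadj]
      ext x
      simp only [Fop, Cpost, harg, hSop, ContinuousLinearMap.sub_apply,
        ContinuousLinearMap.comp_apply, map_sub]
      abel
    rw [heq]
    exact (aux_inverse_sub_inverse_isPositive Sop Dop hSpos hSpd hDpos).conj_adjoint _
  have part2 : ∀ (C : X →L[ℝ] X) (δ : ℝ), C.IsPositive → Fop A M C₀ Γ C δ = C →
      (C - Cpost A C₀ Γ).IsPositive := by
    intro C δ hC hfix
    have := part1 C hC δ
    rwa [hfix] at this
  refine ⟨part1, part2, ?_⟩
  intro C δ hC hfix hCpost x hx
  have hpos := (part2 C δ hC hfix).inner_nonneg_left x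
  simp only [RCLike.re_to_real, ContinuousLinearMap.sub_apply, inner_sub_left] at hpos
  have := hCpost x hx
  linarith
end
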